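/- Let S = K[x_1,...,x_n] be the standard graded polynomial ring over a field K, let c ∈ ℤ, and let i ≥ 0 and 0 ≤ j ≤ n+i-1. Then the higher iterated Hilbert coefficient e^i_j(S(-c)) equals the generalized binomial coefficient C(c, j). In particular, e^i_j(S(-c)) = 0 if and only if 0 ≤ c < j. -/

import Mathlib

open Finset


lemma myDescPoch_prod (r : ℚ) (k : ℕ) :
    (descPochhammer ℚ k).eval r = ∏ t ∈ range k, (r - t) := by
  induction k with
  | zero => simp
  | succ k ih => rw [descPochhammer_succ_eval, ih, prod_range_succ]

lemma myRchoose_prod (r : ℚ) (k : ℕ) :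
    Ring.choose r k = (∏ t ∈ range k, (r - t)) / k.factorial := by
  have h := Ring.descPochhammer_eq_factorial_smul_choose r k
  have hsm : (descPochhammer ℤ k).smeval r = (descPochhammer ℚ k).eval r := by
    rw [← Polynomial.aeval_eq_smeval, Polynomial.aeval_def, ← Polynomial.eval_map,
      descPochhammer_map]
  rw [hsm, myDescPoch_prod, nsmul_eq_mul] at h
  have hf : (k.factorial : ℚ) ≠ 0 := Nat.cast_ne_zero.mpr k.factorial_ne_zero
  field_simp [h]
  rw [h]; ring

lemma myRchoose_neg_one (k : ℕ) : Ring.choose (-1 : ℚ) k = (-1) ^ k := by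
  rw [myRchoose_prod]
  have : ∏ t ∈ range k, ((-1 : ℚ) - t) = (-1) ^ k * k.factorial := by
    induction k with
    | zero => simp
    | succ k ih =>
      rw [prod_range_succ, ih, Nat.factorial_succ]
      push_cast; ring
  rw [this]
  have hf : (k.factorial : ℚ) ≠ 0 := Nat.cast_ne_zero.mpr k.factorial_ne_zero
  field_simp

lemma myRchoose_nat_lt {a k : ℕ} (h : a < k) : Ring.choose ((a : ℕ) : ℚ) k = 0 := by
  rw [Ring.choose_natCast, Nat.choose_eq_zero_of_lt h, Nat.cast_zero]

lemma myProd_neg (u : ℚ) (k : ℕ) :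
    ∏ t ∈ range k, (u - (t : ℚ)) = (-1) ^ k * ∏ t ∈ range k, ((t : ℚ) - u) := by
  induction k with
  | zero => simp
  | succ k ih => rw [prod_range_succ, prod_range_succ, ih]; ring

lemma myRchoose_reflect (u : ℚ) (k : ℕ) :
    Ring.choose u k = (-1) ^ k * Ring.choose ((k : ℚ) - 1 - u) k := by
  rw [myRchoose_prod, myRchoose_prod]
  have h1 : ∏ t ∈ range k, ((k : ℚ) - 1 - u - t) = ∏ t ∈ range k, ((t : ℚ) - u) := by
    rw [← prod_range_reflect (fun t => (k : ℚ) - 1 - u - t) k]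
    refine prod_congr rfl fun t ht => ?_
    have ht' : t < k := mem_range.mp ht
    have : ((k - 1 - t : ℕ) : ℚ) = (k : ℚ) - 1 - t := by
      push_cast [Nat.cast_sub (by omega : t ≤ k - 1), Nat.cast_sub (by omega : 1 ≤ k)]
      ring
    rw [this]; ring
  rw [h1, myProd_neg]; ring

lemma myRchoose_int_zero_iff (c : ℤ) (j : ℕ) :
    Ring.choose ((c : ℤ) : ℚ) j = 0 ↔ 0 ≤ c ∧ c < j := by
  rw [myRchoose_prod, _root_.div_eq_zero_iff]
  have hf : (j.factorial : ℚ) ≠ 0 := Nat.cast_ne_zero.mpr j.factorial_ne_zero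
  simp only [hf, or_false, prod_eq_zero_iff]
  constructor
  · rintro ⟨t, ht, ht0⟩
    have : (c : ℚ) = t := by linarith [sub_eq_zero.mp ht0]
    have hc : c = (t : ℤ) := by exact_mod_cast this
    exact ⟨by omega, by rw [hc]; exact_mod_cast mem_range.mp ht⟩
  · rintro ⟨h0, h1⟩
    refine ⟨c.toNat, mem_range.mpr (by omega), ?_⟩
    have h2 : (c.toNat : ℤ) = c := Int.toNat_of_nonneg h0
    rw [sub_eq_zero]
    exact_mod_cast h2.symm

lemma myIdent (c r : ℚ) (m : ℕ) :
    Ring.choose (r - c + m) m =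
      ∑ j ∈ range (m + 1), (-1) ^ j * Ring.choose c j * Ring.choose (r + (m : ℚ) - j) (m - j) := by
  have hv := Ring.add_choose_eq (r := c) (s := -r - 1) m (Commute.all _ _)
  rw [Finset.Nat.sum_antidiagonal_eq_sum_range_succ_mk] at hv
  have lhs : Ring.choose (r - c + m) m = (-1 : ℚ) ^ m * Ring.choose (c + (-r - 1)) m := by
    rw [myRchoose_reflect (r - c + m) m,
      show ((m : ℚ) - 1 - (r - c + m)) = c + (-r - 1) by ring]
  have rhsj : ∀ j ∈ range (m + 1),
      (-1 : ℚ) ^ j * Ring.choose c j * Ring.choose (r + (m : ℚ) - j) (m - j)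
        = (-1 : ℚ) ^ m * (Ring.choose c j * Ring.choose (-r - 1) (m - j)) := by
    intro j hj
    have hj' : j ≤ m := by have := mem_range.mp hj; omega
    have hpow : (-1 : ℚ) ^ j * (-1) ^ (m - j) = (-1) ^ m := by
      rw [← pow_add, Nat.add_sub_cancel' hj']
    rw [myRchoose_reflect (r + (m : ℚ) - j) (m - j),
      show (((m - j : ℕ) : ℚ) - 1 - (r + (m : ℚ) - j)) = -r - 1 by
        push_cast [Nat.cast_sub hj']; ring]
    linear_combination (Ring.choose c j * Ring.choose (-r - 1) (m - j)) * hpow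
  rw [sum_congr rfl rhsj, ← mul_sum, ← hv, lhs]


/-- For `S = K[x_1,…,x_n]`, `c ∈ ℤ`, `i ≥ 0`: if the `i`-th iterated Hilbert
polynomial `P^i_{S(-c)}(x) = C(x - c + n + i - 1, n + i - 1)` of `S(-c)` is expanded in the
binomial basis as `Σ_{j=0}^{n+i-1} (-1)^j e_j C(x + n + i - j - 1, n + i - j - 1)`, then for
`0 ≤ j ≤ n + i - 1` the higher iterated Hilbert coefficient satisfies `e_j = C(c, j)`;
in particular `e_j = 0` if and only if `0 ≤ c < j`. -/
theorem higher_hilbert_coefficients_of_shifted_free_module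
    (n : ℕ) (hn : 1 ≤ n) (c : ℤ) (i : ℕ) (e : ℕ → ℚ)
    (he : ∀ x : ℤ,
      Ring.choose ((x : ℚ) - (c : ℚ) + (n : ℚ) + (i : ℚ) - 1) (n + i - 1) =
        ∑ j ∈ range (n + i), (-1 : ℚ) ^ j * e j *
          Ring.choose ((x : ℚ) + (n : ℚ) + (i : ℚ) - (j : ℚ) - 1) (n + i - j - 1)) :
    ∀ j : ℕ, j ≤ n + i - 1 →
      e j = Ring.choose (c : ℚ) j ∧ (e j = 0 ↔ 0 ≤ c ∧ c < j) := by

  set m := n + i - 1 with hm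
  have hm1 : n + i = m + 1 := by omega
  have hmQ : ((m : ℕ) : ℚ) = (n : ℚ) + i - 1 := by
    have h := congrArg (fun k : ℕ => (k : ℚ)) hm1
    push_cast at h
    linarith
  set d : ℕ → ℚ := fun j => e j - Ring.choose (c : ℚ) j with hd_def
  have hd : ∀ x : ℤ, ∑ j ∈ range (m + 1),
      (-1 : ℚ) ^ j * d j * Ring.choose ((x : ℚ) + (m : ℚ) - j) (m - j) = 0 := by
    intro x
    have h2 := myIdent (c : ℚ) (x : ℚ) m
    have h1 : Ring.choose ((x : ℚ) - c + m) m = ∑ j ∈ range (m + 1),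
        (-1 : ℚ) ^ j * e j * Ring.choose ((x : ℚ) + (m : ℚ) - j) (m - j) := by
      have h0 := he x
      rw [show ((x : ℚ) - (c : ℚ) + (n : ℚ) + (i : ℚ) - 1) = (x : ℚ) - c + m from by
        rw [hmQ]; ring] at h0
      rw [h0, hm1]
      refine sum_congr rfl fun j hj => ?_
      rw [show ((x : ℚ) + (n : ℚ) + (i : ℚ) - (j : ℚ) - 1) = (x : ℚ) + (m : ℚ) - j from by
        rw [hmQ]; ring, show m + 1 - j - 1 = m - j from by omega]
    have h3 : ∑ j ∈ range (m + 1),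
        (-1 : ℚ) ^ j * d j * Ring.choose ((x : ℚ) + (m : ℚ) - j) (m - j)
        = (∑ j ∈ range (m + 1),
            (-1 : ℚ) ^ j * e j * Ring.choose ((x : ℚ) + (m : ℚ) - j) (m - j))
          - ∑ j ∈ range (m + 1),
            (-1 : ℚ) ^ j * Ring.choose (c : ℚ) j *
              Ring.choose ((x : ℚ) + (m : ℚ) - j) (m - j) := by
      rw [← sum_sub_distrib]
      exact sum_congr rfl fun j _ => by simp only [hd_def]; ring
    rw [h3, ← h1, ← h2, sub_self]
  have step : ∀ t, 1 ≤ t → t ≤ m → (∀ j, t < j → j ≤ m → d j = 0) → d t = 0 := by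
    intro t h1t htm hIH
    have hx := hd ((t : ℤ) - 1 - (m : ℤ))
    have hsum : ∑ j ∈ range (m + 1), (-1 : ℚ) ^ j * d j *
        Ring.choose ((((t : ℤ) - 1 - (m : ℤ) : ℤ) : ℚ) + (m : ℚ) - j) (m - j)
        = (-1 : ℚ) ^ t * d t *
          Ring.choose ((((t : ℤ) - 1 - (m : ℤ) : ℤ) : ℚ) + (m : ℚ) - t) (m - t) := by
      refine sum_eq_single_of_mem t (mem_range.mpr (by omega)) fun j hj hne => ?_
      rcases lt_or_gt_of_ne hne with hlt | hgt
      · have hcast : ((((t : ℤ) - 1 - (m : ℤ) : ℤ) : ℚ) + (m : ℚ) - j)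
            = ((t - 1 - j : ℕ) : ℚ) := by
          push_cast [Nat.cast_sub (show j ≤ t - 1 by omega), Nat.cast_sub (show 1 ≤ t by omega)]
          ring
        rw [hcast, myRchoose_nat_lt (show t - 1 - j < m - j by omega)]
        ring
      · rw [hIH j hgt (by have := mem_range.mp hj; omega)]; ring
    rw [hsum] at hx
    have hcast2 : ((((t : ℤ) - 1 - (m : ℤ) : ℤ) : ℚ) + (m : ℚ) - t) = (-1 : ℚ) := by
      push_cast; ring
    rw [hcast2, myRchoose_neg_one] at hx
    rcases mul_eq_zero.mp hx with h | h
    · rcases mul_eq_zero.mp h with h' | h'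
      · exact absurd h' (pow_ne_zero _ (by norm_num))
      · exact h'
    · exact absurd h (pow_ne_zero _ (by norm_num))
  have key : ∀ s t, 1 ≤ t → t ≤ m → m ≤ t + s → d t = 0 := by
    intro s
    induction s with
    | zero => exact fun t h1 h2 h3 => step t h1 h2 (fun j hj1 hj2 => absurd hj2 (by omega))
    | succ s IH =>
      exact fun t h1 h2 h3 => step t h1 h2 (fun j hj1 hj2 => IH j (by omega) hj2 (by omega))
  have hzero : ∀ j, j ≤ m → d j = 0 := by
    intro j hj
    rcases Nat.eq_zero_or_pos j with h0 | hpos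
    · subst h0
      have hx := hd 0
      have hsum : ∑ j ∈ range (m + 1), (-1 : ℚ) ^ j * d j *
          Ring.choose (((0 : ℤ) : ℚ) + (m : ℚ) - j) (m - j)
          = (-1 : ℚ) ^ 0 * d 0 * Ring.choose (((0 : ℤ) : ℚ) + (m : ℚ) - 0) (m - 0) := by
        refine sum_eq_single_of_mem 0 (mem_range.mpr (by omega)) fun j hj hne => ?_
        rw [key m j (by omega) (by have := mem_range.mp hj; omega) (by omega)]
        ring
      rw [hsum, show (((0 : ℤ) : ℚ) + (m : ℚ) - 0) = ((m : ℕ) : ℚ) from by push_cast; ring,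
        Nat.sub_zero, Ring.choose_natCast, Nat.choose_self] at hx
      simpa using hx
    · exact key m j hpos hj (by omega)
  intro j hj
  have h1 : e j = Ring.choose (c : ℚ) j := by
    have := hzero j hj
    simp only [hd_def] at this
    linarith
  exact ⟨h1, by rw [h1]; exact myRchoose_int_zero_iff c j⟩
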